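/- For every integer m > 1, m times the integral of (log(2 sin(πu)))² over u from 0 to 1/m is at most 2.2 + (log m)². -/

import Mathlib

open Real MeasureTheory intervalIntegral Set Filter

lemma log_sq_le_rpow {x : ℝ} (h0 : 0 < x) (h1 : x ≤ 1) :
    (Real.log x)^2 ≤ 16 * x ^ (-(1/2) : ℝ) := by
  set y := x ^ (-(1/4) : ℝ) with hy
  have hy0 : 0 < y := Real.rpow_pos_of_pos h0 _
  have hlogy : Real.log y = -(1/4) * Real.log x := Real.log_rpow h0 _
  have hlx : Real.log x ≤ 0 := Real.log_nonpos h0.le h1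
  have hly0 : 0 ≤ Real.log y := by nlinarith
  have hly : Real.log y ≤ y := (Real.log_le_sub_one_of_pos hy0).trans (by linarith)
  have hsq : (Real.log y)^2 ≤ y^2 := by nlinarith
  have hy2 : y^2 = x ^ (-(1/2) : ℝ) := by
    rw [hy, ← Real.rpow_natCast (x ^ (-(1/4):ℝ)) 2, ← Real.rpow_mul h0.le]
    norm_num
  have : (Real.log x)^2 = 16 * (Real.log y)^2 := by rw [hlogy]; ring
  rw [this, ← hy2]; nlinarith

lemma intervalIntegrable_log_sq_aux (b : ℝ) (hb : 0 ≤ b) (hb1 : b ≤ 1) :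
    IntervalIntegrable (fun x => (Real.log x)^2) volume 0 b := by
  rw [intervalIntegrable_iff_integrableOn_Ioc_of_le hb]
  have hmaj : IntegrableOn (fun x : ℝ => 16 * x ^ (-(1/2) : ℝ)) (Ioc 0 b) volume := by
    have := (intervalIntegral.intervalIntegrable_rpow' (a := 0) (b := b)
      (show (-1:ℝ) < -(1/2) by norm_num)).const_mul 16
    rwa [intervalIntegrable_iff_integrableOn_Ioc_of_le hb] at this
  refine hmaj.integrable.mono ((Real.measurable_log.pow_const 2).aestronglyMeasurable) ?_
  refine (ae_restrict_mem measurableSet_Ioc).mono fun x hx => ?_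
  have h1 : (Real.log x)^2 ≤ 16 * x ^ (-(1/2) : ℝ) :=
    log_sq_le_rpow hx.1 (hx.2.trans hb1)
  have h2 : (0:ℝ) ≤ 16 * x ^ (-(1/2) : ℝ) :=
    mul_nonneg (by norm_num) (Real.rpow_nonneg hx.1.le _)
  simp only [Real.norm_eq_abs]
  rw [abs_of_nonneg (sq_nonneg _), abs_of_nonneg h2]
  exact h1

lemma intervalIntegrable_log_sq (b : ℝ) (hb : 0 ≤ b) :
    IntervalIntegrable (fun x => (Real.log x)^2) volume 0 b := by
  rcases le_or_gt b 1 with hb1 | hb1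
  · exact intervalIntegrable_log_sq_aux b hb hb1
  · have h1 : IntervalIntegrable (fun x => (Real.log x)^2) volume 0 1 :=
      intervalIntegrable_log_sq_aux 1 zero_le_one le_rfl
    have h2 : IntervalIntegrable (fun x => (Real.log x)^2) volume 1 b := by
      apply ContinuousOn.intervalIntegrable
      apply ContinuousOn.pow
      apply Real.continuousOn_log.mono
      intro x hx
      rcases Set.mem_uIcc.1 hx with ⟨h, _⟩ | ⟨h, _⟩ <;> simp <;> nlinarith
    exact h1.trans h2

lemma integral_log_sq (b : ℝ) (hb : 0 < b) :
    ∫ x in (0:ℝ)..b, (Real.log x)^2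
      = b * ((Real.log b)^2 - 2 * Real.log b + 2) := by
  have key := intervalIntegral.integral_eq_sub_of_hasDerivAt_of_tendsto
    (f := fun x => x * ((Real.log x)^2 - 2 * Real.log x + 2))
    (f' := fun x => (Real.log x)^2) hb
    (fa := 0) (fb := b * ((Real.log b)^2 - 2 * Real.log b + 2))
    ?_ (intervalIntegrable_log_sq b hb.le) ?_ ?_
  · rw [key]; ring
  · intro x hx
    have hx0 : x ≠ 0 := ne_of_gt hx.1
    have hlog : HasDerivAt Real.log x⁻¹ x := Real.hasDerivAt_log hx0
    have hG := ((hlog.pow 2).sub ((hasDerivAt_const x (2:ℝ)).mul hlog)).add_const (2:ℝ)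
    have hF := (hasDerivAt_id x).mul hG
    convert hF using 1
    · rfl
    · funext y; simp
    simp only [id, Pi.sub_apply, Pi.mul_apply, Pi.pow_apply]
    push_cast
    field_simp
    ring
  · -- Tendsto at 0 from the right
    have t1 : Tendsto (fun x : ℝ => Real.log x * x ^ ((1:ℝ)/2)) (nhdsWithin 0 (Set.Ioi 0))
        (nhds 0) := tendsto_log_mul_rpow_nhdsGT_zero (by norm_num)
    have t2 : Tendsto (fun x : ℝ => Real.log x * x) (nhdsWithin 0 (Set.Ioi 0))
        (nhds 0) := by
      have := tendsto_log_mul_rpow_nhdsGT_zero (r := 1) one_pos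
      simpa using this
    have t3 : Tendsto (fun x : ℝ => x) (nhdsWithin 0 (Set.Ioi 0)) (nhds 0) :=
      tendsto_id.mono_left nhdsWithin_le_nhds
    have tall : Tendsto (fun x : ℝ =>
        (Real.log x * x ^ ((1:ℝ)/2)) * (Real.log x * x ^ ((1:ℝ)/2))
          - 2 * (Real.log x * x) + 2 * x) (nhdsWithin 0 (Set.Ioi 0)) (nhds 0) := by
      have := ((t1.mul t1).sub ((tendsto_const_nhds (x := (2:ℝ))).mul t2)).add
        ((tendsto_const_nhds (x := (2:ℝ))).mul t3)
      simpa using this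
    refine tall.congr' ?_
    filter_upwards [self_mem_nhdsWithin] with x (hx : 0 < x)
    have hhalf : x ^ ((1:ℝ)/2) * x ^ ((1:ℝ)/2) = x := by
      rw [← Real.rpow_add hx]; norm_num
    ring_nf
    nlinarith [hhalf, sq_nonneg (Real.log x)]
  · -- Tendsto at b from the left: continuity
    have hc : ContinuousAt (fun x : ℝ => x * ((Real.log x)^2 - 2 * Real.log x + 2)) b := by
      have hl : ContinuousAt Real.log b := Real.continuousAt_log hb.ne'
      fun_prop (disch := exact hb.ne')
    exact hc.tendsto.mono_left nhdsWithin_le_nhds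

lemma log_pi_le : Real.log π ≤ 1.16 := by
  have h3 : (0:ℝ) < 3 := by norm_num
  have hpi : π < 3.15 := Real.pi_lt_d2
  have hpi3 : (0:ℝ) < π := Real.pi_pos
  have hlog3 : 2 * Real.log 3 ≤ 3 * Real.log 2 + 1/8 := by
    have h9 : Real.log 9 = 2 * Real.log 3 := by
      rw [show (9:ℝ) = 3^2 by norm_num, Real.log_pow]; push_cast; ring
    have h8 : Real.log 8 = 3 * Real.log 2 := by
      rw [show (8:ℝ) = 2^3 by norm_num, Real.log_pow]; push_cast; ring
    have h98 : Real.log 9 = Real.log 8 + Real.log (9/8) := by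
      rw [← Real.log_mul (by norm_num) (by norm_num)]; norm_num
    have hle : Real.log (9/8 : ℝ) ≤ 9/8 - 1 := Real.log_le_sub_one_of_pos (by norm_num)
    nlinarith
  have hsplit : Real.log π = Real.log 3 + Real.log (π / 3) := by
    rw [← Real.log_mul h3.ne' (by positivity)]
    congr 1
    ring
  have hle2 : Real.log (π / 3) ≤ π / 3 - 1 := Real.log_le_sub_one_of_pos (by positivity)
  have hlog2 : Real.log 2 < 0.6931471808 := Real.log_two_lt_d9
  nlinarith

lemma key_ptwise (m : ℕ) (hm : 1 < m) (u : ℝ) (hu : u ∈ Set.Icc (0:ℝ) (1/m)) :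
    (Real.log (2 * Real.sin (π * u)))^2
      ≤ (Real.log (4 * u))^2 + (Real.log π)^2 := by
  have hπ0 : (0:ℝ) < π := Real.pi_pos
  have hlogπ0 : 0 ≤ Real.log π := Real.log_nonneg (by nlinarith [Real.pi_gt_three])
  rcases eq_or_lt_of_le hu.1 with h0 | h0
  · rw [← h0]
    simp [Real.log_zero]
    positivity
  · have hm2 : (2:ℝ) ≤ m := by exact_mod_cast hm
    have hum : u ≤ 1/m := hu.2
    have hu2 : u ≤ 1/2 := by
      calc u ≤ 1/(m:ℝ) := hum
        _ ≤ 1/2 := by apply one_div_le_one_div_of_le <;> linarith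
    have hx0 : 0 ≤ π * u := by positivity
    have hx2 : π * u ≤ π / 2 := by nlinarith
    have hsin_lb : 2 * u ≤ Real.sin (π * u) := by
      have := Real.mul_le_sin hx0 hx2
      have hne : π ≠ 0 := hπ0.ne'
      calc 2 * u = 2 / π * (π * u) := by field_simp
        _ ≤ Real.sin (π * u) := this
    have hsin_ub : Real.sin (π * u) ≤ π * u := Real.sin_le hx0
    have h4u : (0:ℝ) < 4 * u := by linarith
    have hA : Real.log (4 * u) ≤ Real.log (2 * Real.sin (π * u)) :=
      Real.log_le_log h4u (by linarith)
    have hB : Real.log (2 * Real.sin (π * u)) ≤ Real.log (2 * (π * u)) :=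
      Real.log_le_log (by nlinarith) (by linarith)
    have hBπ : Real.log (2 * (π * u)) ≤ Real.log π :=
      Real.log_le_log (by nlinarith) (by nlinarith)
    set L := Real.log (2 * Real.sin (π * u))
    set A := Real.log (4 * u)
    rcases le_or_gt 0 L with hL | hL
    · have hLπ : L ≤ Real.log π := hB.trans hBπ
      nlinarith [sq_nonneg A]
    · nlinarith [sq_nonneg (Real.log π)]

theorem mul_integral_log_sq_two_sin_le (m : ℕ) (hm : 1 < m) :
    (m : ℝ) * ∫ u in (0:ℝ)..(1/m), (Real.log (2 * Real.sin (π * u)))^2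
      ≤ 2.2 + (Real.log m)^2 := by
  have hm0 : (0:ℝ) < m := by positivity
  have hm2 : (2:ℝ) ≤ m := by exact_mod_cast hm
  set b : ℝ := 1/m with hbdef
  have hb : 0 < b := by positivity
  by_cases hI : IntervalIntegrable
      (fun u => (Real.log (2 * Real.sin (π * u)))^2) volume 0 b
  · -- comparison function
    have hg1 : IntervalIntegrable (fun u => (Real.log (4 * u))^2) volume 0 b := by
      have := (intervalIntegrable_log_sq (4 * b) (by positivity)).comp_mul_left (c := 4)
      have h04 : (0:ℝ)/4 = 0 := by norm_num
      have hb4 : (4*b)/4 = b := by ring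
      rwa [h04, hb4] at this
    have hg : IntervalIntegrable
        (fun u => (Real.log (4 * u))^2 + (Real.log π)^2) volume 0 b :=
      hg1.add (intervalIntegrable_const)
    have hmono := intervalIntegral.integral_mono_on hb.le hI hg
      (fun u hu => key_ptwise m hm u hu)
    have hval : ∫ u in (0:ℝ)..b, ((Real.log (4 * u))^2 + (Real.log π)^2)
        = b * ((Real.log (4*b))^2 - 2 * Real.log (4*b) + 2) + b * (Real.log π)^2 := by
      rw [intervalIntegral.integral_add hg1 intervalIntegrable_const]
      congr 1
      · have hcomp := intervalIntegral.integral_comp_mul_left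
          (f := fun x => (Real.log x)^2) (a := (0:ℝ)) (b := b) (c := 4) (by norm_num)
        rw [hcomp, mul_zero, integral_log_sq (4*b) (by positivity)]
        simp [smul_eq_mul]
        ring
      · simp
    have hineq : (m:ℝ) * ∫ u in (0:ℝ)..b, (Real.log (2 * Real.sin (π * u)))^2
        ≤ (m:ℝ) * (b * ((Real.log (4*b))^2 - 2 * Real.log (4*b) + 2) + b * (Real.log π)^2) := by
      rw [← hval]
      exact mul_le_mul_of_nonneg_left hmono hm0.le
    have hmb : (m:ℝ) * b = 1 := by rw [hbdef]; field_simp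
    have hlog4b : Real.log (4*b) = 2 * Real.log 2 - Real.log m := by
      rw [hbdef, show (4:ℝ) * (1/m) = 4/m by ring, Real.log_div (by norm_num) hm0.ne',
        show (4:ℝ) = 2^2 by norm_num, Real.log_pow]
      push_cast; ring
    refine hineq.trans ?_
    rw [hlog4b]
    have hgoal : (m:ℝ) * (b * ((2*Real.log 2 - Real.log m)^2
          - 2 * (2*Real.log 2 - Real.log m) + 2) + b * (Real.log π)^2)
        = ((2*Real.log 2 - Real.log m)^2 - 2 * (2*Real.log 2 - Real.log m) + 2)
          + (Real.log π)^2 := by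
      field_simp [hbdef]
      rw [hmb]; ring
    rw [hgoal]
    set t := Real.log m
    set l2 := Real.log 2
    have ht : l2 ≤ t := Real.log_le_log (by norm_num) hm2
    have hl2a : l2 < 0.6931471808 := Real.log_two_lt_d9
    have hl2b : (0.6931471803:ℝ) < l2 := Real.log_two_gt_d9
    have hπle : Real.log π ≤ 1.16 := log_pi_le
    have hπ0 : 0 ≤ Real.log π := Real.log_nonneg (by nlinarith [Real.pi_gt_three])
    have hmain : (t - l2) * (4*l2 - 2) ≥ 0 := by nlinarith
    nlinarith [sq_nonneg (Real.log π)]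
  · rw [intervalIntegral.integral_undef hI]
    nlinarith [sq_nonneg (Real.log m)]
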